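/- Fix a prime p > 2 and positive integers b, c with p ≡ 1 (mod b+c). For a ∈ 𝔽̄_p ∖ {0,1}, H{b(p−1)/(b+c)}(a) = 0 if and only if H{c(p−1)/(b+c)}(a) = 0. -/
import Mathlib


open Polynomial Finset

/-- The Deuring polynomial `H{n}(λ) = ∑_{i=0}^n (n choose i)^2 λ^i`. -/
noncomputable def deuring (R : Type*) [CommRing R] (n : ℕ) : Polynomial R :=
  ∑ i ∈ Finset.range (n + 1), Polynomial.C ((n.choose i : R) ^ 2) * Polynomial.X ^ i

namespace DeuringAux

variable {R : Type*} [CommRing R]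

/-- The hypergeometric differential operator with parameters `(-n, -n; 1)`. -/
noncomputable def Lop (n : ℕ) (y : Polynomial R) : Polynomial R :=
  X * (1 - X) * derivative (derivative y)
    + (1 - (1 - 2 * (n : Polynomial R)) * X) * derivative y
    - (n : Polynomial R) ^ 2 * y

lemma coeff_deuring (n k : ℕ) : (deuring R n).coeff k = (n.choose k : R) ^ 2 := by
  rw [deuring, finset_sum_coeff]
  simp only [coeff_C_mul, coeff_X_pow, mul_ite, mul_one, mul_zero]
  rw [Finset.sum_ite_eq (Finset.range (n + 1)) k fun i => ((n.choose i : R)) ^ 2]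
  split
  · rfl
  · next h =>
    rw [Finset.mem_range, not_lt] at h
    rw [Nat.choose_eq_zero_of_lt (by omega)]
    simp

lemma natDegree_deuring_le (n : ℕ) : (deuring R n).natDegree ≤ n := by
  apply natDegree_sum_le_of_forall_le
  intro i hi
  refine (natDegree_C_mul_le _ _).trans ((natDegree_X_pow_le i).trans ?_)
  exact Nat.lt_succ_iff.mp (Finset.mem_range.mp hi)

lemma Lop_shape (n : ℕ) (y : Polynomial R) :
    Lop n y = X * derivative (derivative y) - X * (X * derivative (derivative y))
      + derivative y - C ((1 : R) - 2 * n) * (X * derivative y) - C ((n : R) ^ 2) * y := by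
  rw [Lop]
  simp only [map_sub, map_one, map_mul, map_natCast, map_pow, map_ofNat]
  ring

lemma coeff_X_mul' (q : Polynomial R) (k : ℕ) :
    (X * q).coeff k = if k = 0 then 0 else q.coeff (k - 1) := by
  match k with
  | 0 => simp [mul_coeff_zero]
  | k + 1 => simp [coeff_X_mul]

lemma coeff_Lop (n : ℕ) (y : Polynomial R) (k : ℕ) :
    (Lop n y).coeff k
      = ((k : R) + 1) ^ 2 * y.coeff (k + 1) - ((n : R) - k) ^ 2 * y.coeff k := by
  rw [Lop_shape]
  set r := (1 : R) - 2 * (n : R) with hr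
  set s := (n : R) ^ 2 with hs
  simp only [coeff_sub, coeff_add, coeff_C_mul, coeff_X_mul', coeff_derivative]
  rcases k with _ | _ | k <;>
    · simp only [if_true, if_false, Nat.add_sub_cancel, Nat.succ_ne_zero, Nat.zero_sub,
        reduceIte, mul_zero, zero_mul, sub_zero, zero_sub, add_zero, zero_add, Nat.sub_zero]
      simp only [hr, hs]
      push_cast
      ring


lemma Lop_deuring (n : ℕ) : Lop n (deuring R n) = 0 := by
  ext k
  rw [coeff_Lop, coeff_deuring, coeff_deuring, coeff_zero]
  rcases le_or_gt k n with h | h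
  · have hchoose : ((n.choose (k + 1) * (k + 1) : ℕ) : R) = ((n.choose k * (n - k) : ℕ) : R) := by
      rw [Nat.choose_succ_right_eq]
    push_cast [Nat.cast_sub h] at hchoose
    rw [sub_eq_zero, ← mul_pow, ← mul_pow,
      show ((k : R) + 1) * (n.choose (k + 1) : R) = (n.choose (k + 1) : R) * ((k : R) + 1) by ring,
      hchoose]
    ring
  · rw [Nat.choose_eq_zero_of_lt h, Nat.choose_eq_zero_of_lt (by omega)]
    simp

lemma Lop_one_sub_X_mul (m : ℕ) (v : Polynomial R) :
    Lop (m + 1) ((1 - X) * v)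
      = (1 - X) * Lop m v - (2 * (m : Polynomial R) + 2) * v := by
  have h1 : derivative ((1 - X) * v) = (1 - X) * derivative v - v := by
    simp [derivative_mul]; ring
  have h2 : derivative ((1 - X) * derivative v - v)
      = (1 - X) * derivative (derivative v) - 2 * derivative v := by
    simp [derivative_mul]; ring
  rw [Lop, Lop, h1, h2]
  push_cast
  ring

lemma Lop_pow (m d : ℕ) (v : Polynomial R) :
    Lop (m + d + 1) ((1 - X) ^ (d + 1) * v)
      = (1 - X) ^ (d + 1) * Lop m v
        - (((d : Polynomial R) + 1) * (2 * (m : Polynomial R) + (d : Polynomial R) + 2))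
          * ((1 - X) ^ d * v) := by
  induction d generalizing m v with
  | zero => simpa using Lop_one_sub_X_mul m v
  | succ d ih =>
    have e1 : (1 - X) ^ (d + 2) * v = (1 - X) ^ (d + 1) * ((1 - X) * v) := by ring
    have e2 : m + (d + 1) + 1 = (m + 1) + d + 1 := by omega
    rw [e1, e2, ih (m + 1) ((1 - X) * v), Lop_one_sub_X_mul m v]
    push_cast
    ring

end DeuringAux

open DeuringAux

lemma deuring_eq_pow_mul {K : Type*} [Field K] {p : ℕ} [CharP K p]
    (m d n : ℕ) (hn : n = m + d) (hsum : n + m + 1 = p) :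
    deuring K n = (1 - X : Polynomial K) ^ d * deuring K m := by
  rcases d with _ | e
  · simp [hn]
  -- the key : `Lop n` annihilates the right-hand side
  have hkey : Lop n ((1 - X : Polynomial K) ^ (e + 1) * deuring K m) = 0 := by
    have h := Lop_pow m e (deuring K m)
    rw [Lop_deuring, mul_zero, zero_sub] at h
    have hp : (2 * (m : Polynomial K) + (e : Polynomial K) + 2) = ((p : ℕ) : Polynomial K) := by
      rw [← hsum, hn]
      push_cast
      ring
    rw [mul_assoc, hp, ← map_natCast (C : K →+* Polynomial K) p, CharP.cast_eq_zero K p,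
      map_zero, zero_mul, mul_zero, neg_zero] at h
    rw [show n = m + e + 1 by omega]
    exact h
  set G : Polynomial K := (1 - X : Polynomial K) ^ (e + 1) * deuring K m with hG
  have hdegG : G.natDegree ≤ n := by
    refine natDegree_mul_le.trans ?_
    have h1 : ((1 - X : Polynomial K) ^ (e + 1)).natDegree ≤ e + 1 := by
      refine natDegree_pow_le.trans ?_
      have h : (1 - X : Polynomial K).natDegree ≤ 1 := by
        refine (natDegree_sub_le _ _).trans ?_
        simp
      calc (e + 1) * (1 - X : Polynomial K).natDegree ≤ (e + 1) * 1 := Nat.mul_le_mul_left _ h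
        _ = e + 1 := by omega
    have h2 := natDegree_deuring_le (R := K) m
    omega
  have hrecG : ∀ k : ℕ, ((k : K) + 1) ^ 2 * G.coeff (k + 1) = ((n : K) - k) ^ 2 * G.coeff k := by
    intro k
    have := congrArg (fun q => Polynomial.coeff q k) hkey
    simp only [coeff_zero] at this
    rw [coeff_Lop, sub_eq_zero] at this
    exact this
  have hrecH : ∀ k : ℕ, ((k : K) + 1) ^ 2 * (deuring K n).coeff (k + 1)
      = ((n : K) - k) ^ 2 * (deuring K n).coeff k := by
    intro k
    have := congrArg (fun q => Polynomial.coeff q k) (Lop_deuring (R := K) n)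
    simp only [coeff_zero] at this
    rw [coeff_Lop, sub_eq_zero] at this
    exact this
  have hnp : n < p := by omega
  have hcoeff : ∀ k : ℕ, (deuring K n).coeff k = G.coeff k := by
    intro k
    induction k with
    | zero =>
      rw [coeff_deuring, hG, Polynomial.mul_coeff_zero, coeff_deuring]
      have : ((1 - X : Polynomial K) ^ (e + 1)).coeff 0 = 1 := by
        rw [coeff_zero_eq_eval_zero]
        simp
      rw [this]
      simp
    | succ k ih =>
      rcases le_or_gt (k + 1) n with h | h
      · have hne : (((k : K) + 1) ^ 2) ≠ 0 := by
          have : ((k + 1 : ℕ) : K) ≠ 0 := by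
            rw [Ne, CharP.cast_eq_zero_iff K p]
            intro hdvd
            have := Nat.le_of_dvd (by omega) hdvd
            omega
          push_cast at this
          exact pow_ne_zero 2 this
        apply mul_left_cancel₀ hne
        rw [hrecH k, hrecG k, ih]
      · rw [Polynomial.coeff_eq_zero_of_natDegree_lt
            (lt_of_le_of_lt (natDegree_deuring_le n) h),
          Polynomial.coeff_eq_zero_of_natDegree_lt (lt_of_le_of_lt hdegG h)]
  exact Polynomial.ext hcoeff

lemma deuring_eval_zero_iff {K : Type*} [Field K] {p : ℕ} [CharP K p]
    (m n : ℕ) (hmn : m ≤ n) (hsum : n + m + 1 = p)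
    (a : K) (ha1 : a ≠ 1) :
    (deuring K n).eval a = 0 ↔ (deuring K m).eval a = 0 := by
  have h := deuring_eq_pow_mul (K := K) (p := p) m (n - m) n (by omega) hsum
  have := congrArg (fun q => Polynomial.eval a q) h
  simp only [eval_mul, eval_pow, eval_sub, eval_one, eval_X] at this
  rw [this]
  have h1a : (1 : K) - a ≠ 0 := sub_ne_zero.mpr fun h => ha1 h.symm
  constructor
  · intro h0
    rcases mul_eq_zero.mp h0 with h' | h'
    · exact absurd h' (pow_ne_zero _ h1a)
    · exact h'
  · intro h0
    rw [h0, mul_zero]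

theorem deuring_root_symm (p : ℕ) [Fact p.Prime] (hp2 : 2 < p)
    (b c : ℕ) (hb : 0 < b) (hc : 0 < c) (hmod : p % (b + c) = 1)
    (a : AlgebraicClosure (ZMod p)) (ha0 : a ≠ 0) (ha1 : a ≠ 1) :
    (deuring (AlgebraicClosure (ZMod p)) (b * (p - 1) / (b + c))).eval a = 0 ↔
      (deuring (AlgebraicClosure (ZMod p)) (c * (p - 1) / (b + c))).eval a = 0 := by
  have hbc : 0 < b + c := by omega
  have hdm := Nat.mod_add_div p (b + c)
  set q := p / (b + c) with hq
  have hkey : (b + c) * q = p - 1 := by omega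
  have hb' : b * (p - 1) / (b + c) = b * q := by
    rw [← hkey, show b * ((b + c) * q) = (b + c) * (b * q) by ring,
      Nat.mul_div_cancel_left _ hbc]
  have hc' : c * (p - 1) / (b + c) = c * q := by
    rw [← hkey, show c * ((b + c) * q) = (b + c) * (c * q) by ring,
      Nat.mul_div_cancel_left _ hbc]
  rw [hb', hc']
  have hsum : b * q + c * q + 1 = p := by
    have : b * q + c * q = (b + c) * q := by ring
    omega
  rcases le_total (c * q) (b * q) with h | h
  · exact deuring_eval_zero_iff (p := p) (c * q) (b * q) h hsum a ha1
  · exact (deuring_eval_zero_iff (p := p) (b * q) (c * q) h (by omega) a ha1).symm
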